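/- arXiv:1209.6385 — 4 statements merged into one kernel-verified Lean document; each statement's English description precedes it below -/
import Mathlib

section
/- Let L < U be positive, α ∈ (−∞,0)\{−1}, F(x) = (L^{1+α} − x^{1+α})/(L^{1+α} − U^{1+α}), and let r + c ∈ ℝ, ζ ∈ ℝ^N with α = ‖ζ‖²/(2(r+c)). Then F solves the nonlinear ODE (r+c)·x·F'(x) − (1/2)‖ζ‖²·(F'(x))²/F''(x) = 0 for all x ∈ (L, U). -/
open Matrix

theorem stmt6 (N : ℕ) (L U a : ℝ) (hL : 0 < L) (hLU : L < U)
    (ζ : Fin N → ℝ) (hζ : ζ ≠ 0) (ha : a < 0) :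
    let α : ℝ := (ζ ⬝ᵥ ζ) / (2 * a)
    let F : ℝ → ℝ := fun x => (L ^ (1 + α) - x ^ (1 + α)) / (L ^ (1 + α) - U ^ (1 + α))
    ∀ x ∈ Set.Ioo L U,
      a * x * deriv F x - 1 / 2 * (ζ ⬝ᵥ ζ) * (deriv F x) ^ 2 / deriv (deriv F) x = 0 := by
  intro α F x hx
  have hx0 : 0 < x := hL.trans hx.1
  have hs : 0 < ζ ⬝ᵥ ζ := by
    rcases lt_or_gt_of_ne ((dotProduct_self_eq_zero (v := ζ)).not.mpr hζ) with h | h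
    · exfalso
      have : 0 ≤ ζ ⬝ᵥ ζ := Finset.sum_nonneg fun i _ => mul_self_nonneg _
      linarith
    · exact h
  have ha' : a ≠ 0 := ne_of_lt ha
  have hα : α < 0 := div_neg_of_pos_of_neg hs (by linarith)
  set p : ℝ := 1 + α with hp_def
  by_cases hp : p = 0
  · -- α = -1, F is constant 0
    have hF0 : F = fun _ => (0 : ℝ) := by
      funext y
      simp only [F, ← hp_def, hp, Real.rpow_zero, sub_self, zero_div]
    rw [hF0]
    simp
  · have hd : (L : ℝ) ^ p - U ^ p ≠ 0 := by
      rcases lt_or_gt_of_ne hp with h | h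
      · have := Real.rpow_lt_rpow_of_neg hL hLU h
        intro hc; nlinarith
      · have := Real.rpow_lt_rpow hL.le hLU h
        intro hc; nlinarith
    set d : ℝ := L ^ p - U ^ p with hd_def
    have hF : ∀ y : ℝ, 0 < y → HasDerivAt F ((0 - p * y ^ (p - 1)) / d) y := by
      intro y hy
      have h1 : HasDerivAt (fun z : ℝ => z ^ p) (p * y ^ (p - 1)) y :=
        Real.hasDerivAt_rpow_const (Or.inl hy.ne')
      have h2 : HasDerivAt (fun z : ℝ => (L : ℝ) ^ p - z ^ p) (0 - p * y ^ (p - 1)) y :=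
        (hasDerivAt_const y ((L : ℝ) ^ p)).sub h1
      exact h2.div_const d
    have hderivF : ∀ y : ℝ, 0 < y → deriv F y = (0 - p * y ^ (p - 1)) / d := fun y hy =>
      (hF y hy).deriv
    have hF'x : deriv F x = (0 - p * x ^ (p - 1)) / d := hderivF x hx0
    have hEq : deriv F =ᶠ[nhds x] fun y => (0 - p * y ^ (p - 1)) / d := by
      filter_upwards [IsOpen.mem_nhds isOpen_Ioi (Set.mem_Ioi.mpr hx0)] with y hy
      exact hderivF y hy
    have hF'' : deriv (deriv F) x = (0 - p * ((p - 1) * x ^ (p - 1 - 1))) / d := by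
      rw [hEq.deriv_eq]
      have h1 : HasDerivAt (fun z : ℝ => z ^ (p - 1)) ((p - 1) * x ^ (p - 1 - 1)) x :=
        Real.hasDerivAt_rpow_const (Or.inl hx0.ne')
      have h2 : HasDerivAt (fun z : ℝ => (0 : ℝ) - p * z ^ (p - 1))
          (0 - p * ((p - 1) * x ^ (p - 1 - 1))) x :=
        (hasDerivAt_const x (0 : ℝ)).sub (h1.const_mul p)
      exact (h2.div_const d).deriv
    rw [hF'x, hF'']
    have hA : (0 : ℝ) < x ^ (p - 1 - 1) := Real.rpow_pos_of_pos hx0 _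
    have hxp1 : x ^ (p - 1) = x ^ (p - 1 - 1) * x := by
      rw [← Real.rpow_add_one hx0.ne']
      norm_num
    have hα1 : p - 1 = α := by rw [hp_def]; ring
    have hsval : ζ ⬝ᵥ ζ = 2 * a * α := by
      show ζ ⬝ᵥ ζ = 2 * a * ((ζ ⬝ᵥ ζ) / (2 * a))
      field_simp
    rw [hsval, hxp1, hα1]
    have hαne : α ≠ 0 := ne_of_lt hα
    field_simp
    ring
end

section
/- Let β < 0, L > 0, and define F(x) = (1/|β|)·log(x/L) for x ∈ [L, ∞). Then F(L) = 0, F is strictly increasing and strictly concave on (L, ∞), and F satisfies 1 + (r+c)xF'(x) − (1/2)‖ζ‖²(F'(x))²/F''(x) = 0 on (L, ∞) whenever β = (r+c) + (1/2)‖ζ‖². -/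
open Matrix

theorem stmt12 (N : ℕ) (L a : ℝ) (hL : 0 < L) (ζ : Fin N → ℝ) (hζ : ζ ≠ 0)
    (hβ : a + (ζ ⬝ᵥ ζ) / 2 < 0) :
    let β : ℝ := a + (ζ ⬝ᵥ ζ) / 2
    let F : ℝ → ℝ := fun x => 1 / |β| * Real.log (x / L)
    F L = 0 ∧ StrictMonoOn F (Set.Ioi L) ∧ StrictConcaveOn ℝ (Set.Ioi L) F ∧
    ∀ x ∈ Set.Ioi L,
      1 + a * x * deriv F x - 1 / 2 * (ζ ⬝ᵥ ζ) * (deriv F x) ^ 2 / deriv (deriv F) x = 0 := by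
  intro β F
  have hβ' : β < 0 := hβ
  have habs : |β| = -β := abs_of_neg hβ'
  have hb0 : (0:ℝ) < |β| := abs_pos.mpr hβ'.ne
  set c : ℝ := 1 / |β| with hc
  have hc0 : 0 < c := by positivity
  -- derivative computation
  have hFd : ∀ x : ℝ, 0 < x → HasDerivAt F (c * x⁻¹) x := by
    intro x hx
    have h1 : HasDerivAt (fun y : ℝ => y / L) (1 / L) x := (hasDerivAt_id x).div_const L
    have h2 : HasDerivAt (fun y : ℝ => Real.log (y / L)) ((1 / L) / (x / L)) x :=
      h1.log (by positivity)
    have h3 := h2.const_mul c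
    rw [div_div_div_cancel_right₀ hL.ne', one_div] at h3
    exact h3
  have hderiv : ∀ x : ℝ, 0 < x → deriv F x = c * x⁻¹ := fun x hx => (hFd x hx).deriv
  have hderiv2 : ∀ x : ℝ, 0 < x → deriv (deriv F) x = -(c * (x ^ 2)⁻¹) := by
    intro x hx
    have hev : deriv F =ᶠ[nhds x] fun y => c * y⁻¹ := by
      filter_upwards [eventually_gt_nhds hx] with y hy using hderiv y hy
    rw [hev.deriv_eq]
    have : HasDerivAt (fun y : ℝ => c * y⁻¹) (c * (-(x ^ 2)⁻¹)) x :=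
      (hasDerivAt_inv hx.ne').const_mul c
    rw [this.deriv]; ring
  have hcont : ContinuousOn F (Set.Ioi L) := by
    intro x hx
    exact ((hFd x (hL.trans hx)).differentiableAt.continuousAt).continuousWithinAt
  refine ⟨?_, ?_, ?_, ?_⟩
  · show c * Real.log (L / L) = 0
    rw [div_self hL.ne', Real.log_one, mul_zero]
  · refine strictMonoOn_of_deriv_pos (convex_Ioi L) hcont ?_
    intro x hx
    rw [interior_Ioi] at hx
    have hx0 : 0 < x := hL.trans hx
    rw [hderiv x hx0]
    positivity
  · refine strictConcaveOn_of_deriv2_neg (convex_Ioi L) hcont ?_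
    intro x hx
    rw [interior_Ioi] at hx
    have hx0 : 0 < x := hL.trans hx
    show deriv (deriv F) x < 0
    rw [hderiv2 x hx0]
    have : 0 < c * (x ^ 2)⁻¹ := by positivity
    linarith
  · intro x hx
    have hx0 : 0 < x := hL.trans hx
    rw [hderiv x hx0, hderiv2 x hx0]
    have ha : a = β - (ζ ⬝ᵥ ζ) / 2 := by simp [β]
    rw [ha, hc, habs]
    have hβne : β ≠ 0 := hβ'.ne
    field_simp
    ring
end

section
/- Let β > 0, U > 0, and define G(x) = (1/β)·log(U/x) for x ∈ (0, U]. Then G(U) = 0, G is strictly decreasing and strictly convex on (0, U), and G satisfies 1 + (r+c)xG'(x) − (1/2)‖ζ‖²(G'(x))²/G''(x) = 0 on (0, U), where β = (r+c) + (1/2)‖ζ‖². -/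
open Matrix

theorem stmt13 (N : ℕ) (U a : ℝ) (hU : 0 < U) (ζ : Fin N → ℝ) (hζ : ζ ≠ 0)
    (hβ : 0 < a + (ζ ⬝ᵥ ζ) / 2) :
    let β : ℝ := a + (ζ ⬝ᵥ ζ) / 2
    let G : ℝ → ℝ := fun x => 1 / β * Real.log (U / x)
    G U = 0 ∧ StrictAntiOn G (Set.Ioo 0 U) ∧ StrictConvexOn ℝ (Set.Ioo 0 U) G ∧
    ∀ x ∈ Set.Ioo 0 U,
      1 + a * x * deriv G x - 1 / 2 * (ζ ⬝ᵥ ζ) * (deriv G x) ^ 2 / deriv (deriv G) x = 0 := by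
  intro β G
  have hβ0 : (0:ℝ) < β := hβ
  have hβne : β ≠ 0 := ne_of_gt hβ0
  -- first derivative
  have hD1 : ∀ x ∈ Set.Ioi (0:ℝ), HasDerivAt G (-(1/(β*x))) x := by
    intro x hx
    have hx0 : x ≠ 0 := ne_of_gt hx
    have h1 : HasDerivAt (fun y : ℝ => 1/β * (Real.log U - Real.log y)) (-(1/(β*x))) x := by
      have := ((Real.hasDerivAt_log hx0).const_sub (Real.log U)).const_mul (1/β)
      convert this using 1
      · rfl
      · rfl
      · ring
    apply h1.congr_of_eventuallyEq
    filter_upwards [IsOpen.mem_nhds isOpen_Ioi hx] with y hy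
    have hy0 : (y:ℝ) ≠ 0 := ne_of_gt hy
    simp only [G, Real.log_div (ne_of_gt hU) hy0]
  have hd1 : ∀ x ∈ Set.Ioi (0:ℝ), deriv G x = -(1/(β*x)) := fun x hx => (hD1 x hx).deriv
  -- second derivative
  have hD2 : ∀ x ∈ Set.Ioi (0:ℝ), HasDerivAt (deriv G) (1/(β*x^2)) x := by
    intro x hx
    have hx0 : x ≠ 0 := ne_of_gt hx
    have h1 : HasDerivAt (fun y : ℝ => -(1/β) * y⁻¹) (1/(β*x^2)) x := by
      have := (hasDerivAt_inv hx0).const_mul (-(1/β))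
      convert this using 1
      · rfl
      · rfl
      · ring
    apply h1.congr_of_eventuallyEq
    filter_upwards [IsOpen.mem_nhds isOpen_Ioi hx] with y hy
    rw [hd1 y hy]; field_simp
  have hd2 : ∀ x ∈ Set.Ioi (0:ℝ), deriv (deriv G) x = 1/(β*x^2) :=
    fun x hx => (hD2 x hx).deriv
  refine ⟨?_, ?_, ?_, ?_⟩
  · simp [G, div_self (ne_of_gt hU)]
  · intro x hx y hy hxy
    have : Real.log (U/y) < Real.log (U/x) := by
      apply Real.log_lt_log (div_pos hU hy.1)
      exact div_lt_div_of_pos_left hU hx.1 hxy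
    have h := mul_lt_mul_of_pos_left this (by positivity : (0:ℝ) < 1/β)
    simpa [G] using h
  · have hc : StrictConvexOn ℝ (Set.Ioi (0:ℝ)) G := by
      apply strictConvexOn_of_deriv2_pos (convex_Ioi 0)
      · apply ContinuousOn.mul continuousOn_const
        apply Real.continuousOn_log.comp
          (continuousOn_const.div continuousOn_id fun x hx => ne_of_gt hx)
        intro x hx
        simp only [Set.mem_compl_iff, Set.mem_singleton_iff, id]
        exact ne_of_gt (div_pos hU hx)
      · intro x hx
        rw [interior_Ioi] at hx
        show 0 < deriv (deriv G) x
        rw [hd2 x hx]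
        have hx0 : (0:ℝ) < x := hx
        positivity
    exact hc.subset Set.Ioo_subset_Ioi_self (convex_Ioo 0 U)
  · intro x hx
    rw [hd1 x hx.1, hd2 x hx.1]
    have hx0 : x ≠ 0 := ne_of_gt hx.1
    have : β = a + (ζ ⬝ᵥ ζ)/2 := rfl
    field_simp
    ring
end

section
/- Fix d ∉ {0, −1}, U > 0, a := r + c ∈ ℝ, ζ ∈ ℝ^N, ρ > 0 and set G(x) = (x/U)^{−d} for x > 0. Then G solves the nonlinear ODE −ρG(x) + a·x·G'(x) − (1/2)‖ζ‖²·(G'(x))²/G''(x) = 0 for all x > 0 if and only if d satisfies a·d² + (a + k + ρ)d + ρ = 0 with k = ‖ζ‖²/2. -/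
open Matrix

private lemma rpow_div_hasDeriv (U p : ℝ) (hU : 0 < U) {x : ℝ} (hx : 0 < x) :
    HasDerivAt (fun y : ℝ => (y / U) ^ p) (p * (x / U) ^ (p - 1) * (1 / U)) x := by
  have h1 : HasDerivAt (fun y : ℝ => y / U) (1 / U) x := by
    simpa using (hasDerivAt_id x).div_const U
  have h2 : HasDerivAt (fun u : ℝ => u ^ p) (p * (x / U) ^ (p - 1)) (x / U) :=
    Real.hasDerivAt_rpow_const (Or.inl (ne_of_gt (div_pos hx hU)))
  exact h2.comp x h1

private lemma rpow_div_deriv (U p : ℝ) (hU : 0 < U) {x : ℝ} (hx : 0 < x) :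
    deriv (fun y : ℝ => (y / U) ^ p) x = p * (x / U) ^ (p - 1) * (1 / U) :=
  (rpow_div_hasDeriv U p hU hx).deriv

private lemma rpow_div_deriv2 (U d : ℝ) (hU : 0 < U) {x : ℝ} (hx : 0 < x) :
    deriv (deriv (fun y : ℝ => (y / U) ^ (-d))) x
      = -d * ((-d - 1) * (x / U) ^ (-d - 1 - 1) * (1 / U)) * (1 / U) := by
  have hev : deriv (fun y : ℝ => (y / U) ^ (-d))
      =ᶠ[nhds x] fun y : ℝ => -d * (y / U) ^ (-d - 1) * (1 / U) := by
    filter_upwards [isOpen_Ioi.mem_nhds (show x ∈ Set.Ioi (0:ℝ) from hx)] with y hy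
    exact rpow_div_deriv U (-d) hU hy
  rw [hev.deriv_eq]
  have h1 : HasDerivAt (fun y : ℝ => (y / U) ^ (-d - 1))
      ((-d - 1) * (x / U) ^ (-d - 1 - 1) * (1 / U)) x := rpow_div_hasDeriv U (-d - 1) hU hx
  have h2 : HasDerivAt (fun y : ℝ => -d * (y / U) ^ (-d - 1) * (1 / U))
      (-d * ((-d - 1) * (x / U) ^ (-d - 1 - 1) * (1 / U)) * (1 / U)) x := by
    simpa [mul_assoc, mul_comm, mul_left_comm] using ((h1.const_mul (-d)).mul_const (1 / U))
  exact h2.deriv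

theorem stmt16 (N : ℕ) (U a d ρ : ℝ) (hU : 0 < U) (hρ : 0 < ρ)
    (ζ : Fin N → ℝ) (hd0 : d ≠ 0) (hd1 : d ≠ -1) :
    let k : ℝ := (ζ ⬝ᵥ ζ) / 2
    let G : ℝ → ℝ := fun x => (x / U) ^ (-d)
    (∀ x : ℝ, 0 < x →
        -ρ * G x + a * x * deriv G x
          - 1 / 2 * (ζ ⬝ᵥ ζ) * (deriv G x) ^ 2 / deriv (deriv G) x = 0) ↔
      a * d ^ 2 + (a + k + ρ) * d + ρ = 0 := by
  intro k G
  have hU' : U ≠ 0 := ne_of_gt hU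
  have hd1' : d + 1 ≠ 0 := fun h => hd1 (by linarith)
  have hk : 1 / 2 * (ζ ⬝ᵥ ζ) = k := by simp [k]; ring
  have key : ∀ x : ℝ, 0 < x →
      -ρ * G x + a * x * deriv G x
        - 1 / 2 * (ζ ⬝ᵥ ζ) * (deriv G x) ^ 2 / deriv (deriv G) x
      = (x / U) ^ (-d) * (-ρ - a * d - k * (d / (d + 1))) := by
    intro x hx
    have hz : 0 < x / U := div_pos hx hU
    set z : ℝ := x / U with hzdef
    set A : ℝ := z ^ (-d) with hA
    set B : ℝ := z ^ (-d - 1) with hB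
    set C : ℝ := z ^ (-d - 1 - 1) with hC
    have hC0 : C ≠ 0 := ne_of_gt (Real.rpow_pos_of_pos hz _)
    have hzB : z * B = A := by
      rw [hB, hA, show (-d : ℝ) = 1 + (-d - 1) by ring, Real.rpow_add hz, Real.rpow_one]
      ring_nf
    have hB2 : B ^ 2 = A * C := by
      rw [hB, hA, hC, ← Real.rpow_natCast (z ^ ((-d : ℝ) - 1)) 2,
        ← Real.rpow_mul hz.le, ← Real.rpow_add hz]
      norm_num
      ring_nf
    have hd1G : deriv G x = -d * B * (1 / U) := by
      simpa [G, hzdef, hB] using rpow_div_deriv U (-d) hU hx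
    have hd2G : deriv (deriv G) x = -d * ((-d - 1) * C * (1 / U)) * (1 / U) := by
      simpa [G, hzdef, hC] using rpow_div_deriv2 U d hU hx
    have hxz : x = U * z := by rw [hzdef]; field_simp
    rw [hd1G, hd2G, hk]
    show -ρ * A + a * x * (-d * B * (1 / U))
        - k * (-d * B * (1 / U)) ^ 2 / (-d * ((-d - 1) * C * (1 / U)) * (1 / U))
      = A * (-ρ - a * d - k * (d / (d + 1)))
    rw [hxz]
    have h2 : a * (U * z) * (-d * B * (1 / U)) = -(a * d * A) := by
      rw [← hzB]; field_simp
    rw [h2]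
    have h3 : k * (-d * B * (1 / U)) ^ 2 / (-d * ((-d - 1) * C * (1 / U)) * (1 / U))
        = k * (d / (d + 1)) * A := by
      have hm1 : (-d - 1 : ℝ) ≠ 0 := fun h => hd1' (by linarith)
      have hden : -d * ((-d - 1) * C * (1 / U)) * (1 / U) ≠ 0 :=
        mul_ne_zero (mul_ne_zero (neg_ne_zero.mpr hd0)
          (mul_ne_zero (mul_ne_zero hm1 hC0) (one_div_ne_zero hU'))) (one_div_ne_zero hU')
      rw [div_eq_iff hden, mul_pow, mul_pow, hB2]
      field_simp
      ring
    rw [h3]; ring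
  constructor
  · intro h
    have h0 := (key U hU).symm.trans (h U hU)
    rw [div_self hU', Real.one_rpow, one_mul] at h0
    field_simp at h0
    linear_combination -h0
  · intro hq x hx
    rw [key x hx]
    have : -ρ - a * d - k * (d / (d + 1)) = 0 := by
      field_simp
      linear_combination -hq
    rw [this, mul_zero]
end
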